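/- Let f : ℕ → ℕ be monotonically increasing and suppose that its Grundy function satisfies G_f(y,z) = y ⊕ z for all y, z ∈ ℕ with y ≤ f(z). Then f satisfies condition (a): for all z, z' ∈ ℕ and every integer i ≥ 1, if ⌊z/2^i⌋ = ⌊z'/2^i⌋ then ⌊f(z)/2^(i-1)⌋ = ⌊f(z')/2^(i-1)⌋. -/

import Mathlib

/-- Condition (a): if `⌊z/2^i⌋ = ⌊z'/2^i⌋` for some `i ≥ 1`,
then `⌊h(z)/2^(i-1)⌋ = ⌊h(z')/2^(i-1)⌋`. -/
def CondA (h : ℕ → ℕ) : Prop :=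
  ∀ z z' i : ℕ, 1 ≤ i → z / 2 ^ i = z' / 2 ^ i →
    h z / 2 ^ (i - 1) = h z' / 2 ^ (i - 1)

/-- The minimum excluded value of a set of natural numbers. -/
noncomputable def mex (S : Set ℕ) : ℕ := sInf {n | n ∉ S}

/-- The Grundy function of the chocolate bar game `CB(f,·,·)`:
`G_f(y,z) = mex({G_f(v,z) : v < y} ∪ {G_f(min(y, f w), w) : w < z})`. -/
noncomputable def grundy (f : ℕ → ℕ) (y z : ℕ) : ℕ :=
  mex ({x | ∃ v, ∃ _ : v < y, x = grundy f v z} ∪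
       {x | ∃ w, ∃ _ : w < z, x = grundy f (min y (f w)) w})
termination_by (z, y)

lemma mex_not_mem {S : Set ℕ} (hS : S.Finite) : mex S ∉ S :=
  Nat.sInf_mem (Set.Finite.infinite_compl hS).nonempty

lemma xor_split : ∀ m a b c d : ℕ, b < 2^m → d < 2^m →
    ((2^m*a + b) ^^^ (2^m*c + d)) = 2^m*(a ^^^ c) + (b ^^^ d) := by
  intro m
  induction m with
  | zero =>
    intro a b c d hb hd
    interval_cases b
    interval_cases d
    simp
  | succ m ih =>
    intro a b c d hb hd
    have key : ∀ u v : ℕ, u ^^^ v = 2*(u/2 ^^^ v/2) + (u % 2 + v % 2) % 2 := by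
      intro u v
      conv_lhs => rw [← Nat.div_add_mod (u ^^^ v) 2]
      rw [Nat.xor_div_two, Nat.xor_mod_two_eq, Nat.add_mod]
    have hp : (2:ℕ)^(m+1) = 2*2^m := by rw [pow_succ]; ring
    have hd1 : (2^(m+1)*a + b)/2 = 2^m*a + b/2 := by
      rw [hp, mul_assoc, Nat.mul_add_div (by norm_num)]
    have hd2 : (2^(m+1)*c + d)/2 = 2^m*c + d/2 := by
      rw [hp, mul_assoc, Nat.mul_add_div (by norm_num)]
    have hm1 : (2^(m+1)*a + b)%2 = b%2 := by
      rw [hp, mul_assoc, Nat.mul_add_mod]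
    have hm2 : (2^(m+1)*c + d)%2 = d%2 := by
      rw [hp, mul_assoc, Nat.mul_add_mod]
    rw [key (2^(m+1)*a + b) (2^(m+1)*c + d), hd1, hd2, hm1, hm2,
      ih a (b/2) c (d/2) (by omega) (by omega), key b d]
    rw [hp]
    ring

lemma xor_even_succ {t : ℕ} (ht : t % 2 = 0) : t ^^^ (t+1) = 1 := by
  obtain ⟨u, rfl⟩ : ∃ u, t = 2*u := ⟨t/2, by omega⟩
  have := xor_split 1 u 0 u 1 (by norm_num) (by norm_num)
  simpa using this

lemma xor_even_one {q : ℕ} (hq : q % 2 = 0) : q ^^^ 1 = q + 1 := by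
  obtain ⟨u, rfl⟩ : ∃ u, q = 2*u := ⟨q/2, by omega⟩
  have := xor_split 1 u 0 0 1 (by norm_num) (by norm_num)
  simpa using this

lemma mod_split (x m : ℕ) : x % 2^(m+1) = 2^m*((x/2^m)%2) + x%2^m := by
  have h : (2:ℕ)^(m+1) = 2^m*2 := by rw [pow_succ]
  rw [h, Nat.mod_mul]
  ring

lemma star (f : ℕ → ℕ) (hG : ∀ y z : ℕ, y ≤ f z → grundy f y z = y ^^^ z)
    {w Y : ℕ} (h1 : f w < Y) (hw : w < w ^^^ (f w ^^^ Y))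
    (h2 : Y ≤ f (w ^^^ (f w ^^^ Y))) : False := by
  set ZZ := w ^^^ (f w ^^^ Y) with hZZ
  have hxor : Y ^^^ ZZ = f w ^^^ w := by
    rw [hZZ]
    apply Nat.eq_of_testBit_eq
    intro k
    simp only [Nat.testBit_xor]
    cases w.testBit k <;> cases (f w).testBit k <;> cases Y.testBit k <;> rfl
  set S : Set ℕ := ({x | ∃ v, ∃ _ : v < Y, x = grundy f v ZZ} ∪
       {x | ∃ w', ∃ _ : w' < ZZ, x = grundy f (min Y (f w')) w'}) with hS
  have hunf : grundy f Y ZZ = mex S := by rw [grundy]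
  have hfin : S.Finite := by
    apply Set.Finite.union
    · have : {x | ∃ v, ∃ _ : v < Y, x = grundy f v ZZ} =
        (fun v => grundy f v ZZ) '' (Set.Iio Y) := by
        ext x; simp [eq_comm]
      rw [this]; exact (Set.finite_Iio Y).image _
    · have : {x | ∃ w', ∃ _ : w' < ZZ, x = grundy f (min Y (f w')) w'} =
        (fun w' => grundy f (min Y (f w')) w') '' (Set.Iio ZZ) := by
        ext x; simp [eq_comm]
      rw [this]; exact (Set.finite_Iio ZZ).image _
  have hnm : mex S ∉ S := mex_not_mem hfin
  apply hnm
  have hmem : f w ^^^ w ∈ S := by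
    refine Or.inr ⟨w, hw, ?_⟩
    rw [min_eq_right h1.le, hG (f w) w le_rfl]
  rw [← hunf, hG Y ZZ h2, hxor]
  exact hmem

lemma mini (f : ℕ → ℕ) (Z : ℕ)
    (hR : ∀ u v : ℕ, u < Z → v < Z → ∀ i : ℕ, 1 ≤ i → u/2^i = v/2^i →
      f u/2^(i-1) = f v/2^(i-1)) :
    ∀ m q : ℕ, (q+1)*2^m ≤ Z → ∃ x, x/2^m = q ∧ ((x%2^m) ^^^ (f x%2^m)) = 2^m - 1 := by
  intro m
  induction m with
  | zero =>
    intro q hq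
    exact ⟨q, by simp, by simp [Nat.mod_one]⟩
  | succ m ih =>
    intro q hq
    set β := (f (2^(m+1)*q)/2^m)%2 with hβdef
    have hβ : β = 0 ∨ β = 1 := Nat.mod_two_eq_zero_or_one _
    set q' := 2*q + (1-β) with hq'def
    have hle : (q'+1)*2^m ≤ Z := by
      have h1 : (q'+1)*2^m ≤ (2*q+2)*2^m := Nat.mul_le_mul_right _ (by omega)
      have h2 : (2*q+2)*2^m = (q+1)*2^(m+1) := by rw [pow_succ]; ring
      omega
    obtain ⟨x, hx1, hx2⟩ := ih q' hle
    have hP : (0:ℕ) < 2^m := Nat.two_pow_pos m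
    have hxq : x/2^(m+1) = q := by
      rw [pow_succ, ← Nat.div_div_eq_div_mul, hx1]
      omega
    have hxlt : x < Z := by
      have h1 : x < (x/2^m + 1)*2^m := by
        have := Nat.div_add_mod x (2^m)
        have := Nat.mod_lt x hP
        nlinarith
      rw [hx1] at h1
      omega
    have hx0lt : 2^(m+1)*q < Z := by
      have h1 : 2^(m+1)*q ≤ 2^(m+1)*(x/2^(m+1)) := by rw [hxq]
      have h2 : 2^(m+1)*(x/2^(m+1)) ≤ x := by
        rw [mul_comm]; exact Nat.div_mul_le_self x _
      omega
    have hfx : f x/2^m = f (2^(m+1)*q)/2^m := by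
      have := hR x (2^(m+1)*q) hxlt hx0lt (m+1) (by omega)
        (by rw [hxq, Nat.mul_div_cancel_left _ (Nat.two_pow_pos (m+1))])
      simpa using this
    have hbitx : (x/2^m)%2 = 1-β := by omega
    have hbitf : (f x/2^m)%2 = β := by rw [hfx]
    refine ⟨x, hxq, ?_⟩
    rw [mod_split x m, mod_split (f x) m, hbitx, hbitf,
      xor_split m (1-β) (x%2^m) β (f x%2^m) (Nat.mod_lt _ hP) (Nat.mod_lt _ hP), hx2]
    have hxor1 : ((1-β) ^^^ β) = 1 := by
      rcases hβ with h | h <;> rw [h] <;> decide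
    rw [hxor1, pow_succ]
    omega

theorem stmt_8 (f : ℕ → ℕ) (hmono : Monotone f)
    (hG : ∀ y z : ℕ, y ≤ f z → grundy f y z = y ^^^ z) :
    CondA f := by
  classical
  by_contra hcon
  simp only [CondA] at hcon
  push_neg at hcon
  obtain ⟨z0, z1, i0, hi0, hdiv0, hne0⟩ := hcon
  have hBadNe : ∃ y, ∃ x ix, x < y ∧ 1 ≤ ix ∧ x/2^ix = y/2^ix ∧
      f x/2^(ix-1) ≠ f y/2^(ix-1) := by
    rcases lt_trichotomy z0 z1 with h | h | h
    · exact ⟨z1, z0, i0, h, hi0, hdiv0, hne0⟩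
    · exact absurd (by rw [h]) hne0
    · exact ⟨z0, z1, i0, h, hi0, hdiv0.symm, fun e => hne0 e.symm⟩
  set Z := sInf {y | ∃ x ix, x < y ∧ 1 ≤ ix ∧ x/2^ix = y/2^ix ∧
      f x/2^(ix-1) ≠ f y/2^(ix-1)} with hZdef
  have hZbad : ∃ x ix, x < Z ∧ 1 ≤ ix ∧ x/2^ix = Z/2^ix ∧
      f x/2^(ix-1) ≠ f Z/2^(ix-1) := Nat.sInf_mem hBadNe
  have hminZ : ∀ y, y < Z → ¬ (∃ x ix, x < y ∧ 1 ≤ ix ∧ x/2^ix = y/2^ix ∧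
      f x/2^(ix-1) ≠ f y/2^(ix-1)) := fun y hy => Nat.notMem_of_lt_sInf hy
  clear_value Z
  have hR : ∀ u v : ℕ, u < Z → v < Z → ∀ j : ℕ, 1 ≤ j → u/2^j = v/2^j →
      f u/2^(j-1) = f v/2^(j-1) := by
    intro u v hu hv j hj hd
    rcases lt_trichotomy u v with h | h | h
    · by_contra hne; exact hminZ v hv ⟨u, j, h, hj, hd, hne⟩
    · rw [h]
    · by_contra hne; exact hminZ u hu ⟨v, j, h, hj, hd.symm, fun e => hne e.symm⟩
  obtain ⟨x0, i1, hx0, hi1, hdiv1, hne1⟩ := hZbad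
  obtain ⟨z, hzZ⟩ : ∃ z, z + 1 = Z := ⟨Z - 1, by omega⟩
  have hsand : z/2^i1 = Z/2^i1 := by
    have h1 : x0/2^i1 ≤ z/2^i1 := Nat.div_le_div_right (by omega)
    have h2 : z/2^i1 ≤ Z/2^i1 := Nat.div_le_div_right (by omega)
    omega
  have hviol1 : f z/2^(i1-1) ≠ f Z/2^(i1-1) := by
    intro heq
    by_cases hxz : x0 = z
    · rw [hxz] at hne1; exact hne1 heq
    · have hdd : x0/2^i1 = z/2^i1 := by omega
      exact hne1 ((hR x0 z (by omega) (by omega) i1 hi1 hdd).trans heq)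
  have hPex : ∃ j, 1 ≤ j ∧ z/2^j = Z/2^j ∧ f z/2^(j-1) ≠ f Z/2^(j-1) :=
    ⟨i1, hi1, hsand, hviol1⟩
  have hi : 1 ≤ Nat.find hPex := (Nat.find_spec hPex).1
  have hdivi := (Nat.find_spec hPex).2.1
  have hnei := (Nat.find_spec hPex).2.2
  set i := Nat.find hPex with hidef
  have hmodsucc : z % 2^i + 1 = Z % 2^i := by
    have h1 := Nat.div_add_mod z (2^i)
    rw [hdivi] at h1
    have h2 := Nat.div_add_mod Z (2^i)
    have h3 := Nat.mod_lt Z (Nat.two_pow_pos i)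
    omega
  -- bit (i-1) of z is 0
  have hbitz : (z/2^(i-1)) % 2 = 0 := by
    by_cases hone : i = 1
    · rw [hone]
      norm_num
      rw [hone] at hmodsucc
      have h3 := Nat.mod_lt Z (Nat.two_pow_pos 1)
      omega
    · have hi2 : 2 ≤ i := by omega
      have hstep : z/2^(i-1) ≠ Z/2^(i-1) := by
        intro heq
        have hmin' := Nat.find_min hPex (show i - 1 < i by omega)
        simp only [not_and] at hmin'
        have heq2 : f z/2^(i-1-1) = f Z/2^(i-1-1) := by
          by_contra hne2
          exact hmin' (by omega) heq hne2
        have hrw : ∀ u : ℕ, u/2^(i-1-1)/2 = u/2^(i-1) := by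
          intro u
          rw [Nat.div_div_eq_div_mul, ← pow_succ]
          congr 2
          omega
        have hcg := congrArg (· / 2) heq2
        rw [hrw, hrw] at hcg
        exact hnei hcg
      have hdd : z/2^(i-1) + 1 = Z/2^(i-1) := by
        have h1 : z/2^(i-1) ≤ Z/2^(i-1) := Nat.div_le_div_right (by omega)
        have h2 : Z/2^(i-1) ≤ z/2^(i-1) + 1 := by
          have h3 : Z ≤ z + 2^(i-1) := by
            have := Nat.two_pow_pos (i-1)
            omega
          have h4 := Nat.div_le_div_right (c := 2^(i-1)) h3
          rw [Nat.add_div_right _ (Nat.two_pow_pos (i-1))] at h4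
          omega
        omega
      have hlow : z % 2^(i-1) = 2^(i-1) - 1 := by
        have h1 := Nat.div_add_mod z (2^(i-1))
        have h2 := Nat.div_add_mod Z (2^(i-1))
        have h3 := Nat.mod_lt z (Nat.two_pow_pos (i-1))
        have h4 : 2^(i-1)*(z/2^(i-1)+1) = 2^(i-1)*(z/2^(i-1)) + 2^(i-1) := by ring
        rw [← hdd, h4] at h2
        omega
      have hms := mod_split z (i-1)
      have hieq : (i-1)+1 = i := by omega
      rw [hieq] at hms
      have hZlt := Nat.mod_lt Z (Nat.two_pow_pos i)
      have h2i : (2:ℕ)^i = 2^(i-1)*2 := by rw [← pow_succ, hieq]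
      rcases Nat.mod_two_eq_zero_or_one (z/2^(i-1)) with h | h
      · exact h
      · rw [h] at hms
        omega
  set g := f z / 2^(i-1) with hgdef
  have hδex : ∃ d, (g/2^d)%2 = 0 := ⟨g, by rw [Nat.div_eq_of_lt (Nat.lt_two_pow_self : g < 2^g)]⟩
  set K := (g+1)*2^(i-1) with hKdef
  set δ := Nat.find hδex with hδdef
  have hTeven : (g/2^δ)%2 = 0 := Nat.find_spec hδex
  have hchain : ∀ d, d ≤ δ → (g/2^d) + 1 ≤ f Z/2^(i-1+d) ∧ (g/2^d + 1)*2^(i-1+d) = K := by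
    intro d
    induction d with
    | zero =>
      intro _
      constructor
      · have hle : g ≤ f Z/2^(i-1) := by
          rw [hgdef]
          exact Nat.div_le_div_right (hmono (show z ≤ Z by omega))
        have hne : g ≠ f Z/2^(i-1) := by rw [hgdef]; exact hnei
        simp only [pow_zero, Nat.div_one, Nat.add_zero]
        omega
      · simp [hKdef]
    | succ d ihd =>
      intro hdle
      obtain ⟨ih1, ih2⟩ := ihd (by omega)
      have hodd : (g/2^d)%2 = 1 := by
        have := Nat.find_min hδex (show d < δ by omega)
        omega
      have hg1 : g/2^(d+1) = (g/2^d)/2 := by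
        rw [pow_succ, ← Nat.div_div_eq_div_mul]
      have hf1 : f Z/2^(i-1+(d+1)) = (f Z/2^(i-1+d))/2 := by
        have hexp : i-1+(d+1) = (i-1+d)+1 := by omega
        rw [hexp, pow_succ, ← Nat.div_div_eq_div_mul]
      constructor
      · rw [hg1, hf1]
        have := Nat.div_le_div_right (c := 2) ih1
        omega
      · rw [hg1]
        have hp : (2:ℕ)^(i-1+(d+1)) = 2^(i-1+d)*2 := by
          rw [← pow_succ]
          congr 1
        rw [hp, ← ih2]
        have h2 : ((g/2^d)/2 + 1)*2 = g/2^d + 1 := by omega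
        calc ((g/2^d)/2 + 1)*(2^(i-1+d)*2)
            = (((g/2^d)/2+1)*2)*2^(i-1+d) := by ring
          _ = (g/2^d + 1)*2^(i-1+d) := by rw [h2]
  obtain ⟨hchain1, hchain2⟩ := hchain δ le_rfl
  set T := g/2^δ with hTdef
  set n := i - 1 + δ with hndef
  have hTa : f z / 2^n = T := by
    rw [hndef, hTdef, hgdef, Nat.div_div_eq_div_mul, pow_add]
  -- hchain1 : T + 1 ≤ f Z/2^n ; hchain2 : (T+1)*2^n = K  (by defn folding)
  clear_value T n
  clear_value i
  have hKfZ : K ≤ f Z := by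
    rw [← hchain2]
    exact (Nat.le_div_iff_mul_le (Nat.two_pow_pos n)).mp hchain1
  have hfzdec := Nat.div_add_mod (f z) (2^n)
  rw [hTa] at hfzdec
  have haK : f z < K := by
    rw [← hchain2]
    have h2 := Nat.mod_lt (f z) (Nat.two_pow_pos n)
    have h3 : (T+1)*2^n = 2^n*T + 2^n := by ring
    omega
  have hKeq : K = 2^n*(T+1) + 0 := by rw [← hchain2]; ring
  clear_value K
  rcases Nat.mod_two_eq_zero_or_one (z/2^n) with hbA | hbB
  · -- CASE A
    have he0 : f z ^^^ K = 2^n*1 + f z%2^n := by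
      conv_lhs => rw [← hfzdec]
      rw [hKeq, xor_split n T (f z%2^n) (T+1) 0 (Nat.mod_lt _ (Nat.two_pow_pos n))
        (Nat.two_pow_pos n), xor_even_succ hTeven, Nat.xor_zero]
    obtain ⟨rz, hrz⟩ : ∃ r, f z % 2^n = r := ⟨_, rfl⟩
    have hrzlt : rz < 2^n := by rw [← hrz]; exact Nat.mod_lt _ (Nat.two_pow_pos n)
    rw [hrz] at he0
    have hzdec := Nat.div_add_mod z (2^n)
    have hZZ : z ^^^ (f z ^^^ K) = 2^n*(z/2^n+1) + (z%2^n ^^^ rz) := by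
      rw [he0]
      conv_lhs => rw [← hzdec]
      rw [xor_split n (z/2^n) (z%2^n) 1 rz (Nat.mod_lt _ (Nat.two_pow_pos n)) hrzlt,
        xor_even_one hbA]
    have hZle : Z ≤ z ^^^ (f z ^^^ K) := by
      rw [hZZ]
      have h1 : 2^n*(z/2^n+1) = 2^n*(z/2^n) + 2^n := by ring
      have h2 := Nat.mod_lt z (Nat.two_pow_pos n)
      omega
    exact star f hG haK (lt_of_lt_of_le (by omega) hZle) (hKfZ.trans (hmono hZle))
  · -- CASE B
    have hni : i ≤ n := by
      rcases Nat.eq_or_lt_of_le (show i-1 ≤ n by omega) with h | h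
      · exfalso
        rw [← h] at hbB
        exact absurd (hbitz.symm.trans hbB) (by norm_num)
      · omega
    have hz1 : z/2^n ≠ 0 := by
      intro h0
      rw [h0] at hbB
      simp at hbB
    obtain ⟨q, hq1⟩ : ∃ q, q + 1 = z/2^n :=
      ⟨z/2^n - 1, Nat.succ_pred_eq_of_pos (Nat.pos_of_ne_zero hz1)⟩
    have hqeven : q%2 = 0 := by
      have hq2 : (q+1)%2 = 1 := by rw [hq1]; exact hbB
      omega
    have hblock : (q+1)*2^n ≤ Z := by
      rw [hq1]
      have := Nat.div_mul_le_self z (2^n)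
      omega
    obtain ⟨x, hx1, hx2⟩ := mini f Z hR n q hblock
    have hxdec := Nat.div_add_mod x (2^n)
    rw [hx1] at hxdec
    have hxlt : x < z := by
      have h2 := Nat.mod_lt x (Nat.two_pow_pos n)
      have h3 := Nat.div_mul_le_self z (2^n)
      rw [← hq1] at h3
      have h4 : (q+1)*2^n = 2^n*q + 2^n := by ring
      omega
    have hfxT : f x/2^n = T := by
      have hdd : x/2^(n+1) = z/2^(n+1) := by
        have e1 : x/2^(n+1) = (x/2^n)/2 := by rw [pow_succ, ← Nat.div_div_eq_div_mul]
        have e2 : z/2^(n+1) = (z/2^n)/2 := by rw [pow_succ, ← Nat.div_div_eq_div_mul]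
        rw [e1, e2, hx1, ← hq1]
        omega
      have hh := hR x z (by omega) (by omega) (n+1) (by omega) hdd
      simp only [Nat.add_sub_cancel] at hh
      rw [hh, hTa]
    have hfxdec := Nat.div_add_mod (f x) (2^n)
    rw [hfxT] at hfxdec
    have he : f x ^^^ K = 2^n*1 + f x%2^n := by
      conv_lhs => rw [← hfxdec]
      rw [hKeq, xor_split n T (f x%2^n) (T+1) 0 (Nat.mod_lt _ (Nat.two_pow_pos n))
        (Nat.two_pow_pos n), xor_even_succ hTeven, Nat.xor_zero]
    obtain ⟨rx, hrx⟩ : ∃ r, f x % 2^n = r := ⟨_, rfl⟩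
    have hrxlt : rx < 2^n := by rw [← hrx]; exact Nat.mod_lt _ (Nat.two_pow_pos n)
    rw [hrx] at he
    rw [hrx] at hx2
    have hZZ : x ^^^ (f x ^^^ K) = 2^n*(q+1) + (2^n - 1) := by
      rw [he]
      conv_lhs => rw [← hxdec]
      rw [xor_split n q (x%2^n) 1 rx (Nat.mod_lt _ (Nat.two_pow_pos n)) hrxlt,
        xor_even_one hqeven, hx2]
    -- z%2^n < 2^n - 1
    have hzmod : z%2^n < 2^n - 1 := by
      have hlt := Nat.mod_lt z (Nat.two_pow_pos n)
      rcases Nat.eq_or_lt_of_le (show z%2^n ≤ 2^n - 1 by omega) with he2 | h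
      · exfalso
        obtain ⟨c, hc⟩ : ∃ c, c = n - (i-1) := ⟨_, rfl⟩
        have hc1 : 1 ≤ c := by omega
        have hpows : (2:ℕ)^(i-1)*2^c = 2^n := by
          rw [← pow_add]
          congr 1
          omega
        have hzdec2 := Nat.div_add_mod z (2^n)
        have hzeq : z = 2^(i-1)*(2^c*(z/2^n)) + (2^n - 1) := by
          rw [← mul_assoc, hpows]
          omega
        have hdivformula : z/2^(i-1) = 2^c*(z/2^n) + (2^n - 1)/2^(i-1) := by
          conv_lhs => rw [hzeq]
          rw [Nat.mul_add_div (Nat.two_pow_pos (i-1))]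
        obtain ⟨u, hu⟩ : ∃ u, (2:ℕ)^c = u + 1 := ⟨2^c-1, by have := Nat.two_pow_pos c; omega⟩
        have h9 : (2:ℕ)^n - 1 = 2^(i-1)*(2^c-1) + (2^(i-1)-1) := by
          rw [hu]
          simp only [Nat.add_sub_cancel]
          have hexp : (2:ℕ)^(i-1)*(u+1) = 2^(i-1)*u + 2^(i-1) := by ring
          rw [hu] at hpows
          have := Nat.two_pow_pos (i-1)
          omega
        have h10 : ((2:ℕ)^n - 1)/2^(i-1) = 2^c - 1 := by
          rw [h9, Nat.mul_add_div (Nat.two_pow_pos (i-1)),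
            Nat.div_eq_of_lt (by have := Nat.two_pow_pos (i-1); omega)]
          omega
        obtain ⟨mm, hmm⟩ : ∃ mm, (2:ℕ)^c = 2*mm := by
          refine ⟨2^(c-1), ?_⟩
          have hc3 : (2:ℕ)^c = 2^(c-1)*2 := by
            rw [← pow_succ]
            congr 1
            omega
          rw [hc3]
          ring
        rw [hdivformula, h10, hmm, mul_assoc] at hbitz
        have := Nat.two_pow_pos c
        omega
      · exact h
    have hZle : Z ≤ x ^^^ (f x ^^^ K) := by
      rw [hZZ]
      have hzdec3 := Nat.div_add_mod z (2^n)
      rw [← hq1] at hzdec3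
      have h1 : 2^n*(q+1) = 2^n*q + 2^n := by ring
      have := Nat.two_pow_pos n
      omega
    have hfxK : f x < K := by
      rw [hKeq]
      have h2 : rx < 2^n := hrxlt
      have hexp : 2^n*(T+1) = 2^n*T + 2^n := by ring
      omega
    exact star f hG hfxK (lt_of_lt_of_le (by omega) hZle) (hKfZ.trans (hmono hZle))
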